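/- (Virtualised Cutolo) If δ is virtually proto-Berkeley, then for every transitive set M with δ ⊆ M and every A ⊆ M there exists a generic elementary embedding π : (M,∈,A) → (M,∈,A) with crit π < δ. If δ is virtually Berkeley, then moreover crit π can be chosen arbitrarily large below δ. -/

import Mathlib

open FirstOrder FirstOrder.Language

namespace VLC

universe u v

/- ## The language of set theory (with two auxiliary unary predicates) -/

/-- Function symbols: none. -/
inductive Funcs : ℕ → Type
/-- Relation symbols: two unary predicate symbols and one binary (membership) symbol. -/
inductive Rels : ℕ → Type
  | u1 : Rels 1
  | u2 : Rels 1
  | mem : Rels 2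

/-- The first-order language with one binary relation symbol (membership) and two
unary predicate symbols (used for expanded structures `(M, ∈, A, B)`; when a unary
predicate is not needed it is interpreted as the always-false predicate, which does
not change the notion of elementarity). -/
def L3 : Language := ⟨Funcs, Rels⟩

/-- The `L3`-structure on the subclass `{x // dom x}` of a "universe" `V`, with
membership interpreted by `r` and the two unary predicates by `A1`, `A2`. -/
def mstr {V : Type u} (dom : V → Prop) (r : V → V → Prop) (A1 A2 : V → Prop) :
    L3.Structure {x : V // dom x} where
  funMap := fun f _ => nomatch f
  RelMap := fun rel v =>
    match rel with
    | .u1 => A1 (v 0).1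
    | .u2 => A2 (v 0).1
    | .mem => r (v 0).1 (v 1).1

/-- The `L3`-structure on all of `V` with membership `r` (unary predicates empty). -/
def memStr {V : Type u} (r : V → V → Prop) : L3.Structure V where
  funMap := fun f _ => nomatch f
  RelMap := fun rel v =>
    match rel with
    | .u1 => False
    | .u2 => False
    | .mem => r (v 0) (v 1)

/-- An elementary embedding between the structures `({x // domV x}, rV, A1, A2)` and
`({y // domW y}, rW, B1, B2)`: a map preserving the satisfaction of all first-order
formulas of the language of set theory (with two predicates). -/
def ElemEmb {V : Type u} {W : Type v} (domV : V → Prop) (rV : V → V → Prop) (A1 A2 : V → Prop)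
    (domW : W → Prop) (rW : W → W → Prop) (B1 B2 : W → Prop) : Type (max u v) :=
  @ElementaryEmbedding L3 {x : V // domV x} {y : W // domW y}
    (mstr domV rV A1 A2) (mstr domW rW B1 B2)

/-- Application of an elementary embedding. -/
def eApp {V : Type u} {W : Type v} {domV : V → Prop} {rV : V → V → Prop} {A1 A2 : V → Prop}
    {domW : W → Prop} {rW : W → W → Prop} {B1 B2 : W → Prop}
    (e : ElemEmb domV rV A1 A2 domW rW B1 B2) (x : {x : V // domV x}) : {y : W // domW y} :=
  @ElementaryEmbedding.toFun L3 {x : V // domV x} {y : W // domW y}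
    (mstr domV rV A1 A2) (mstr domW rW B1 B2) e x

/-- Realization of a formula with parameters in the full structure `(V, r)`. -/
def RealizeIn {V : Type u} (r : V → V → Prop) {n l : ℕ} (φ : L3.BoundedFormula (Fin n) l)
    (prm : Fin n → V) (xs : Fin l → V) : Prop :=
  @BoundedFormula.Realize L3 V (memStr r) (Fin n) l φ prm xs

/-- Realization of a sentence-with-parameters in the substructure of `(V, r)` on `{x // dom x}`. -/
def RealizeSub {V : Type u} (dom : V → Prop) (r : V → V → Prop) {n l : ℕ}
    (φ : L3.BoundedFormula (Fin n) l) (prm : Fin n → {x : V // dom x})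
    (xs : Fin l → {x : V // dom x}) : Prop :=
  @BoundedFormula.Realize L3 {x : V // dom x} (mstr dom r (fun _ => False) (fun _ => False))
    (Fin n) l φ prm xs

/- ## Basic set-theoretic notions over an abstract membership relation -/

section Basic

variable {V : Type u} (r : V → V → Prop)

/-- `a ⊆ b`. -/
def SubW (a b : V) : Prop := ∀ x, r x a → r x b

/-- `a` is a transitive set. -/
def TransW (a : V) : Prop := ∀ x y, r x a → r y x → r y a

/-- `a` is an ordinal (a transitive set of transitive sets; this is equivalent to the usual
definition in the presence of foundation). -/
def OrdW (a : V) : Prop := TransW r a ∧ ∀ x, r x a → TransW r x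

/-- `a ≤ b` for ordinals: `a ∈ b ∨ a = b`. -/
def ordLe (a b : V) : Prop := r a b ∨ a = b

/-- `p = {a, b}`. -/
def IsUPair (p a b : V) : Prop := ∀ x, r x p ↔ (x = a ∨ x = b)

/-- `p` is the (Kuratowski) ordered pair `⟨a, b⟩`. -/
def IsOPair (p a b : V) : Prop :=
  ∃ sa sab, IsUPair r sa a a ∧ IsUPair r sab a b ∧ IsUPair r p sa sab

/-- The pair `⟨x, y⟩` belongs to `f` (i.e. `f(x) = y` when `f` is a function). -/
def FApp (f x y : V) : Prop := ∃ z, r z f ∧ IsOPair r z x y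

/-- `f` is a function with domain `a`. -/
def IsFunOn (f a : V) : Prop :=
  (∀ z, r z f → ∃ x y, r x a ∧ IsOPair r z x y) ∧
  (∀ x, r x a → ∃ y, FApp r f x y) ∧
  (∀ x y y', FApp r f x y → FApp r f x y' → y = y')

/-- `f : a → b` is a function. -/
def IsFuncW (f a b : V) : Prop := IsFunOn r f a ∧ ∀ x y, FApp r f x y → r y b

/-- `f : a → b` is an injective function. -/
def IsInjW (f a b : V) : Prop :=
  IsFuncW r f a b ∧ ∀ x x' y, FApp r f x y → FApp r f x' y → x = x'

/-- `f : a → b` is a surjective function. -/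
def IsSurjW (f a b : V) : Prop :=
  IsFuncW r f a b ∧ ∀ y, r y b → ∃ x, r x a ∧ FApp r f x y

/-- `a` and `b` are equinumerous. -/
def EquinumW (a b : V) : Prop := ∃ f, IsInjW r f a b ∧ IsSurjW r f a b

/-- `t` is the transitive closure of `x` (the least transitive superset). -/
def TCW (t x : V) : Prop :=
  SubW r x t ∧ TransW r t ∧ ∀ s, SubW r x s → TransW r s → SubW r t s

/-- `|a| < θ` for a cardinal `θ`: `a` injects into some element of `θ`. -/
def CardLtW (a θ : V) : Prop := ∃ β f, r β θ ∧ IsInjW r f a β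

/-- `x ∈ H_θ`: the transitive closure of `x` has cardinality `< θ`. -/
def InHW (θ x : V) : Prop := ∃ t, TCW r t x ∧ CardLtW r t θ

/-- `h = H_θ`, the collection of sets whose transitive closure has size `< θ`. -/
def IsHW (θ h : V) : Prop := ∀ x, r x h ↔ InHW r θ x

/-- `κ` is a cardinal: an ordinal not equinumerous with any of its elements. -/
def IsCardW (κ : V) : Prop := OrdW r κ ∧ ∀ β, r β κ → ¬ EquinumW r β κ

/-- `e = ∅`. -/
def IsEmptyW (e : V) : Prop := ∀ x, ¬ r x e

/-- `s = x ∪ {x}` is the ordinal successor of `x`. -/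
def IsSuccOf (s x : V) : Prop := ∀ z, r z s ↔ (r z x ∨ z = x)

/-- `o` is a limit ordinal. -/
def LimitOrdW (o : V) : Prop := OrdW r o ∧ (∃ x, r x o) ∧ ∀ x, r x o → ∃ y, r y o ∧ r x y

/-- `o = ω`, the least limit ordinal. -/
def IsOmegaW (o : V) : Prop := LimitOrdW r o ∧ ∀ x, r x o → ¬ LimitOrdW r x

/-- `θ` is a regular cardinal: no function from an element of `θ` into `θ` has unbounded range. -/
def RegularW (θ : V) : Prop := IsCardW r θ ∧
  ∀ β f, r β θ → IsFunOn r f β → (∀ x y, FApp r f x y → r y θ) →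
    ∃ γ, r γ θ ∧ ∀ x y, FApp r f x y → r y γ

/-- `θ` is a regular uncountable cardinal. -/
def RegUncW (θ : V) : Prop := RegularW r θ ∧ ∃ o, IsOmegaW r o ∧ r o θ

/-- `θ` is an infinite regular cardinal. -/
def RegularInfW (θ : V) : Prop := RegularW r θ ∧ ∃ o, IsOmegaW r o ∧ ordLe r o θ

/-- `p = 𝒫(x)`. -/
def IsPowW (p x : V) : Prop := ∀ z, r z p ↔ SubW r z x

/-- `θ` is inaccessible: an uncountable regular strong limit cardinal. -/
def InaccW (θ : V) : Prop :=
  RegUncW r θ ∧ ∀ β p, r β θ → IsPowW r p β → CardLtW r p θ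

/-- `s = κ⁺` is the cardinal successor of `κ`. -/
def CardSuccOf (κ s : V) : Prop := IsCardW r s ∧ r κ s ∧ ∀ c, IsCardW r c → r κ c → ordLe r s c

/-- `C` is a club (closed unbounded set) in `δ`. -/
def ClubInW (C δ : V) : Prop :=
  SubW r C δ ∧ (∀ x, r x C → OrdW r x) ∧
  (∀ α, r α δ → ∃ β, r β C ∧ (r α β ∨ α = β)) ∧
  (∀ γ, r γ δ → OrdW r γ → (∃ x, r x γ) →
    (∀ α, r α γ → ∃ β, r β C ∧ r α β ∧ r β γ) → r γ C)

/-- `δ` is a Mahlo cardinal: inaccessible, and every club in `δ` contains a regular cardinal. -/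
def MahloW (δ : V) : Prop :=
  InaccW r δ ∧ ∀ C, ClubInW r C δ → ∃ κ, r κ C ∧ RegularInfW r κ

/-- `g = f ↾ κ` is the restriction of the function `f` to `κ`. -/
def RestrOf (g f κ : V) : Prop :=
  ∀ z, r z g ↔ (r z f ∧ ∃ x y, IsOPair r z x y ∧ r x κ)

/-- `κ` is a closure point of the function `f`: `f '' κ ⊆ κ`. -/
def ClosurePtW (f κ : V) : Prop := ∀ x y, r x κ → FApp r f x y → r y κ

/-- `⟨p, q⟩` belongs to the relation (set of ordered pairs) `rel`. -/
def RelIn (rel p q : V) : Prop := ∃ z, r z rel ∧ IsOPair r z p q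

/-- `a` is countable: `a` injects into `ω`. -/
def CountableW (a : V) : Prop := ∃ o f, IsOmegaW r o ∧ IsInjW r f a o

end Basic

/- ## ZFC universes -/

/-- A universe of ZFC: a (well-founded) type with a membership relation satisfying the ZFC
axioms; the separation and replacement schemas are stated for all first-order formulas
(with parameters) of the language of set theory. Foundation is strengthened to
well-foundedness, i.e. we consider standard models. -/
structure ZFUniv : Type (u + 1) where
  V : Type u
  mem : V → V → Prop
  wf : WellFounded mem
  extensionality : ∀ x y : V, (∀ z, mem z x ↔ mem z y) → x = y
  pairing : ∀ x y : V, ∃ p, IsUPair mem p x y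
  unions : ∀ x : V, ∃ u, ∀ z, mem z u ↔ ∃ y, mem y x ∧ mem z y
  power : ∀ x : V, ∃ p, IsPowW mem p x
  infinity : ∃ o : V, IsOmegaW mem o
  separation : ∀ (n : ℕ) (φ : L3.BoundedFormula (Fin n) 1) (prm : Fin n → V) (a : V),
    ∃ b, ∀ x, mem x b ↔ (mem x a ∧ RealizeIn mem φ prm (fun _ => x))
  replacement : ∀ (n : ℕ) (φ : L3.BoundedFormula (Fin n) 2) (prm : Fin n → V) (a : V),
    (∀ x y y', mem x a → RealizeIn mem φ prm ![x, y] → RealizeIn mem φ prm ![x, y'] → y = y') →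
    ∃ b, ∀ y, mem y b ↔ ∃ x, mem x a ∧ RealizeIn mem φ prm ![x, y]
  choice : ∀ a : V, (∀ x, mem x a → ∃ y, mem y x) →
    ∃ f, IsFunOn mem f a ∧ ∀ x y, mem x a → FApp mem f x y → mem y x

/- ## Set-forcing extensions -/

/-- A set-forcing extension of the universe `u`: a universe `W` together with an
inclusion of `u` as a transitive subclass, a forcing poset `pos` (with preorder `lerel`,
a set of ordered pairs, where `RelIn lerel p q` means `p` is stronger than `q`)
belonging to `u`, a filter `G ⊆ pos` meeting every dense subset of `pos` that belongs
to `u`, such that `G ∈ W` and every element of `W` is the value `val τ` of some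
`pos`-name `τ ∈ u`, where names are evaluated by `G` in the standard recursive fashion.
This pins `W` down as the generic extension `u[G]`. -/
structure Extension (u : ZFUniv.{u}) : Type (u + 1) where
  W : ZFUniv.{u}
  inc : u.V → W.V
  inc_inj : Function.Injective inc
  inc_mem : ∀ x y, W.mem (inc x) (inc y) ↔ u.mem x y
  inc_trans : ∀ (x : u.V) (w : W.V), W.mem w (inc x) → ∃ y, u.mem y x ∧ w = inc y
  pos : u.V
  lerel : u.V
  le_pairs : ∀ z, u.mem z lerel → ∃ p q, u.mem p pos ∧ u.mem q pos ∧ IsOPair u.mem z p q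
  le_refl : ∀ p, u.mem p pos → RelIn u.mem lerel p p
  le_trans : ∀ p q s, RelIn u.mem lerel p q → RelIn u.mem lerel q s → RelIn u.mem lerel p s
  G : u.V → Prop
  G_sub : ∀ p, G p → u.mem p pos
  G_ne : ∃ p, G p
  G_up : ∀ p q, G p → u.mem q pos → RelIn u.mem lerel p q → G q
  G_dir : ∀ p q, G p → G q → ∃ s, G s ∧ RelIn u.mem lerel s p ∧ RelIn u.mem lerel s q
  G_gen : ∀ D, (∀ d, u.mem d D → u.mem d pos) →
    (∀ p, u.mem p pos → ∃ d, u.mem d D ∧ RelIn u.mem lerel d p) → ∃ p, G p ∧ u.mem p D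
  Gset : W.V
  Gset_spec : ∀ w, W.mem w Gset ↔ ∃ p, G p ∧ w = inc p
  val : u.V → W.V
  val_spec : ∀ τ w, W.mem w (val τ) ↔
    ∃ σ p z, u.mem z τ ∧ IsOPair u.mem z σ p ∧ G p ∧ w = val σ
  val_surj : ∀ w, ∃ τ, w = val τ

/- ## Generic elementary embeddings -/

/-- A generic elementary embedding from the structure `(h, ∈, A1, A2)`, where `h` is a set
of the universe `u`, to a structure `(tgt, ∈, bset, b2)` living in some set-forcing
extension of `u`: the embedding is an element (`code`) of the extension `E.W`, and `emb`
is its externalization, an elementary embedding in the model-theoretic sense. -/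
structure GenEmb (u : ZFUniv.{u}) (h : u.V) (A1 A2 : u.V → Prop) : Type (u + 1) where
  E : Extension u
  tgt : E.W.V
  bset : E.W.V
  b2 : E.W.V → Prop := fun _ => False
  emb : ElemEmb (u.mem · h) u.mem A1 A2 (E.W.mem · tgt) E.W.mem (E.W.mem · bset) b2
  code : E.W.V
  code_fun : IsFuncW E.W.mem code (E.inc h) tgt
  code_graph : ∀ x (hx : u.mem x h), FApp E.W.mem code (E.inc x) (eApp emb ⟨x, hx⟩).1

namespace GenEmb

variable {u : ZFUniv.{u}} {h : u.V} {A1 A2 : u.V → Prop} (D : GenEmb u h A1 A2)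

/-- The critical point of the embedding is `κ`: `κ` is an ordinal, all ordinals below `κ`
are fixed, and `κ` is moved. -/
def crit (κ : u.V) : Prop :=
  OrdW u.mem κ ∧ ∃ hκ : u.mem κ h,
    (∀ α (hα : u.mem α h), u.mem α κ → (eApp D.emb ⟨α, hα⟩).1 = D.E.inc α) ∧
    (eApp D.emb ⟨κ, hκ⟩).1 ≠ D.E.inc κ

/-- `π(x) = y` where `y` is (the copy of) a set of the ground universe. -/
def mapsTo (x y : u.V) : Prop := ∃ hx : u.mem x h, (eApp D.emb ⟨x, hx⟩).1 = D.E.inc y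

/-- `π(κ) > θ`. -/
def jGT (κ θ : u.V) : Prop := ∃ hκ : u.mem κ h, D.E.W.mem (D.E.inc θ) (eApp D.emb ⟨κ, hκ⟩).1

/-- `π(κ) ≤ θ`. -/
def jLE (κ θ : u.V) : Prop := ∃ hκ : u.mem κ h, ordLe D.E.W.mem (eApp D.emb ⟨κ, hκ⟩).1 (D.E.inc θ)

/-- `H_θ ⊆ N`, i.e. the domain `h` is contained in the target. -/
def hSub : Prop := ∀ x, u.mem x h → D.E.W.mem (D.E.inc x) D.tgt

/-- The target is a transitive set (of the extension). -/
def tgtTrans : Prop := TransW D.E.W.mem D.tgt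

/-- The target is (the copy of) the ground-universe set `N`; in particular `N ⊆ V`. -/
def tgtIs (N : u.V) : Prop := D.tgt = D.E.inc N

/-- `B ∩ h = A` where `B` is the predicate of the target structure. -/
def bMatch (A : u.V → Prop) : Prop :=
  ∀ x, u.mem x h → (D.E.W.mem (D.E.inc x) D.bset ↔ A x)

/-- The target is closed under `<θ`-sequences from the ground universe: every function
in `u` from an ordinal `γ < θ` into the target belongs to the target. -/
def closedLt (θ : u.V) : Prop := ∀ s γ, u.mem γ θ → OrdW u.mem γ → IsFunOn u.mem s γ →
  (∀ x y, FApp u.mem s x y → D.E.W.mem (D.E.inc y) D.tgt) → D.E.W.mem (D.E.inc s) D.tgt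

/-- The embedding is `κ`-powerset preserving: its domain and target have the same subsets
of `κ` (in the extension). -/
def powerPres (κ : u.V) : Prop :=
  ∀ w, SubW D.E.W.mem w (D.E.inc κ) → (D.E.W.mem w (D.E.inc h) ↔ D.E.W.mem w D.tgt)

/-- `H_θ = H_θ^N` : the domain `h = H_θ` coincides with `H_θ` as computed inside the
(possibly generic) transitive target `N = tgt`, namely the collection of `x ∈ N` having,
in `N`, a transitive closure `t` and an injection of `t` into some `β ∈ θ`. -/
def hEqHtgt (θ : u.V) : Prop :=
  ∀ w, D.E.W.mem w (D.E.inc h) ↔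
    (D.E.W.mem w D.tgt ∧ ∃ t f β, D.E.W.mem t D.tgt ∧ TCW D.E.W.mem t w ∧
      D.E.W.mem β (D.E.inc θ) ∧ D.E.W.mem f D.tgt ∧ IsInjW D.E.W.mem f t β)

end GenEmb

/-- A generic elementary embedding of plain ∈-structures (no predicates). -/
abbrev PlainEmb (u : ZFUniv.{u}) (h : u.V) : Type (u + 1) :=
  GenEmb u h (fun _ => False) (fun _ => False)


section Notions

variable (u : ZFUniv.{u})

/- ### Measurable / strong / supercompact family -/

/-- `κ` is faintly `θ`-measurable: in a forcing extension there are a transitive set `N`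
and an elementary embedding `π : H_θ → N` with critical point `κ`. -/
def FaintMeasAt (θ κ : u.V) : Prop := ∃ h, IsHW u.mem θ h ∧
  ∃ D : PlainEmb u h, D.tgtTrans ∧ D.crit κ

/-- `κ` is virtually `θ`-measurable: moreover `N ⊆ V` (the target is a set of the ground
universe). -/
def VirtMeasAt (θ κ : u.V) : Prop := ∃ h, IsHW u.mem θ h ∧
  ∃ (N : u.V) (D : PlainEmb u h), D.tgtIs N ∧ TransW u.mem N ∧ D.crit κ

/-- `κ` is faintly `θ`-pre-strong: faintly `θ`-measurable with `H_θ ⊆ N`. -/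
def FaintPreStrongAt (θ κ : u.V) : Prop := ∃ h, IsHW u.mem θ h ∧
  ∃ D : PlainEmb u h, D.tgtTrans ∧ D.crit κ ∧ D.hSub

/-- `κ` is faintly `θ`-strong: faintly `θ`-pre-strong with `π(κ) > θ`. -/
def FaintStrongAt (θ κ : u.V) : Prop := ∃ h, IsHW u.mem θ h ∧
  ∃ D : PlainEmb u h, D.tgtTrans ∧ D.crit κ ∧ D.hSub ∧ D.jGT κ θ

/-- `κ` is virtually `θ`-pre-strong: `N ⊆ V`, `H_θ ⊆ N`, `crit π = κ`. -/
def VirtPreStrongAt (θ κ : u.V) : Prop := ∃ h, IsHW u.mem θ h ∧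
  ∃ (N : u.V) (D : PlainEmb u h), D.tgtIs N ∧ TransW u.mem N ∧ D.crit κ ∧ D.hSub

/-- `κ` is virtually `θ`-strong: virtually `θ`-pre-strong with `π(κ) > θ`. -/
def VirtStrongAt (θ κ : u.V) : Prop := ∃ h, IsHW u.mem θ h ∧
  ∃ (N : u.V) (D : PlainEmb u h), D.tgtIs N ∧ TransW u.mem N ∧ D.crit κ ∧ D.hSub ∧ D.jGT κ θ

/-- `κ` is virtually `θ`-supercompact: virtually `θ`-measurable with target closed under
`<θ`-sequences from the ground universe and `π(κ) > θ`. -/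
def VirtSupercompactAt (θ κ : u.V) : Prop := ∃ h, IsHW u.mem θ h ∧
  ∃ (N : u.V) (D : PlainEmb u h), D.tgtIs N ∧ TransW u.mem N ∧ D.crit κ ∧
    D.closedLt θ ∧ D.jGT κ θ

/-- `κ` is virtually `θ`-supercompact ala Magidor: there are `κ̄ < θ̄ < κ` and a generic
elementary embedding `π : H_θ̄ → H_θ` with `crit π = κ̄` and `π(κ̄) = κ`. -/
def VirtMagidorAt (θ κ : u.V) : Prop := ∃ κ' θ', u.mem κ' θ' ∧ u.mem θ' κ ∧
  ∃ h' h, IsHW u.mem θ' h' ∧ IsHW u.mem θ h ∧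
    ∃ D : PlainEmb u h', D.tgtIs h ∧ D.crit κ' ∧ D.mapsTo κ' κ

/-- `κ` is virtually strong: virtually `θ`-strong for all regular (uncountable) `θ > κ`. -/
def VirtStrong (κ : u.V) : Prop := ∀ θ, RegUncW u.mem θ → u.mem κ θ → VirtStrongAt u θ κ

/-- `κ` is virtually supercompact. -/
def VirtSupercompact (κ : u.V) : Prop :=
  ∀ θ, RegUncW u.mem θ → u.mem κ θ → VirtSupercompactAt u θ κ

/-- `κ` is virtually supercompact ala Magidor. -/
def VirtMagidor (κ : u.V) : Prop := ∀ θ, RegUncW u.mem θ → u.mem κ θ → VirtMagidorAt u θ κ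

/-- `κ` is virtually pre-strong. -/
def VirtPreStrong (κ : u.V) : Prop := ∀ θ, RegUncW u.mem θ → u.mem κ θ → VirtPreStrongAt u θ κ

/- ### Power(set-preserving) variants -/

/-- `κ` is faintly power-`θ`-measurable: the generic embedding is moreover
`κ`-powerset preserving. -/
def FaintPowerMeasAt (θ κ : u.V) : Prop := ∃ h, IsHW u.mem θ h ∧
  ∃ D : PlainEmb u h, D.tgtTrans ∧ D.crit κ ∧ D.powerPres κ

/-- `κ` is faintly power-`θ`-pre-strong. -/
def FaintPowerPreStrongAt (θ κ : u.V) : Prop := ∃ h, IsHW u.mem θ h ∧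
  ∃ D : PlainEmb u h, D.tgtTrans ∧ D.crit κ ∧ D.hSub ∧ D.powerPres κ

/-- `κ` is faintly power-`θ`-strong. -/
def FaintPowerStrongAt (θ κ : u.V) : Prop := ∃ h, IsHW u.mem θ h ∧
  ∃ D : PlainEmb u h, D.tgtTrans ∧ D.crit κ ∧ D.hSub ∧ D.jGT κ θ ∧ D.powerPres κ

/- ### Superstrong / rank-into-rank family -/

/-- `κ` is virtually `(θ,1)`-superstrong: as virtually `θ`-pre-strong, with `π(κ) ≤ θ`. -/
def VirtSuperstrong1At (θ κ : u.V) : Prop := ∃ h, IsHW u.mem θ h ∧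
  ∃ (N : u.V) (D : PlainEmb u h), D.tgtIs N ∧ TransW u.mem N ∧ D.crit κ ∧ D.hSub ∧ D.jLE κ θ

/-- `κ` is faintly `(θ,1)`-superstrong. -/
def FaintSuperstrong1At (θ κ : u.V) : Prop := ∃ h, IsHW u.mem θ h ∧
  ∃ D : PlainEmb u h, D.tgtTrans ∧ D.crit κ ∧ D.hSub ∧ D.jLE κ θ

/-- `κ` is faintly superstrong: faintly `(θ,1)`-superstrong for some regular uncountable
`θ > κ`. -/
def FaintSuperstrong (κ : u.V) : Prop :=
  ∃ θ, RegUncW u.mem θ ∧ u.mem κ θ ∧ FaintSuperstrong1At u θ κ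

/-- `κ` is virtually `(θ,ω)`-superstrong: as virtually `θ`-pre-strong, together with the
full critical sequence `κ = π⁰(κ), π¹(κ), π²(κ), …` satisfying `πⁿ(κ) < θ` for all `n`
(equivalently `π^ω(κ) = sup_n πⁿ(κ) ≤ θ`). -/
def VirtOmegaSuperstrongAt (θ κ : u.V) : Prop := ∃ h, IsHW u.mem θ h ∧
  ∃ (N : u.V) (D : PlainEmb u h), D.tgtIs N ∧ TransW u.mem N ∧ D.crit κ ∧ D.hSub ∧
    ∃ c : ℕ → u.V, c 0 = κ ∧ ∀ n, u.mem (c n) θ ∧ D.mapsTo (c n) (c (n + 1))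

/-- `κ` is virtually rank-into-rank: there is a cardinal `θ > κ` and a generic elementary
embedding `π : H_θ → H_θ` with `crit π = κ`. -/
def VirtRankToRank (κ : u.V) : Prop := ∃ θ h, IsCardW u.mem θ ∧ u.mem κ θ ∧ IsHW u.mem θ h ∧
  ∃ D : PlainEmb u h, D.tgtIs h ∧ D.crit κ

/- ### (θ, A)-strong family (for a set `A`) and Woodin cardinals -/

/-- `κ` is virtually `(θ, A)`-strong (`A` a set of the ground universe): there is a generic
elementary embedding `π : (H_θ, ∈, A ∩ H_θ) → (N, ∈, B)` with `N` transitive, `N ⊆ V`,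
`crit π = κ`, `π(κ) > θ`, `H_θ ⊆ N` and `B ∩ H_θ = A ∩ H_θ`. -/
def VirtAStrongAt (θ κ A : u.V) : Prop := ∃ h, IsHW u.mem θ h ∧
  ∃ (N : u.V) (D : GenEmb u h (u.mem · A) (fun _ => False)), D.tgtIs N ∧ TransW u.mem N ∧
    D.crit κ ∧ D.jGT κ θ ∧ D.hSub ∧ D.bMatch (u.mem · A)

/-- `κ` is faintly `(θ, A)`-strong: as above but `N` is merely a transitive set of the
extension. -/
def FaintAStrongAt (θ κ A : u.V) : Prop := ∃ h, IsHW u.mem θ h ∧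
  ∃ D : GenEmb u h (u.mem · A) (fun _ => False), D.tgtTrans ∧
    D.crit κ ∧ D.jGT κ θ ∧ D.hSub ∧ D.bMatch (u.mem · A)

/-- `κ` is virtually `(θ, A)`-supercompact: moreover the target is closed under
`<θ`-sequences from the ground universe. -/
def VirtASupercompactAt (θ κ A : u.V) : Prop := ∃ h, IsHW u.mem θ h ∧
  ∃ (N : u.V) (D : GenEmb u h (u.mem · A) (fun _ => False)), D.tgtIs N ∧ TransW u.mem N ∧
    D.crit κ ∧ D.jGT κ θ ∧ D.hSub ∧ D.bMatch (u.mem · A) ∧ D.closedLt θ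

/-- `κ` is virtually `(θ, A)`-extendible: moreover the target is `H_μ` for some cardinal
`μ` of the ground universe. -/
def VirtAExtendibleAt (θ κ A : u.V) : Prop := ∃ h, IsHW u.mem θ h ∧
  ∃ (N : u.V) (D : GenEmb u h (u.mem · A) (fun _ => False)), D.tgtIs N ∧ TransW u.mem N ∧
    D.crit κ ∧ D.jGT κ θ ∧ D.hSub ∧ D.bMatch (u.mem · A) ∧
    ∃ μ, IsCardW u.mem μ ∧ IsHW u.mem μ N

/-- The weakening of virtual `(θ, A)`-strongness in which `N ⊆ V` is replaced by
`H_θ = H_θ^N`. -/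
def WeakAStrongAt (θ κ A : u.V) : Prop := ∃ h, IsHW u.mem θ h ∧
  ∃ D : GenEmb u h (u.mem · A) (fun _ => False), D.tgtTrans ∧
    D.crit κ ∧ D.jGT κ θ ∧ D.hEqHtgt θ ∧ D.bMatch (u.mem · A)

/-- `κ` is virtually `(<δ, A)`-strong: virtually `(θ, A ∩ H_θ)`-strong for all regular
(uncountable) `θ` with `κ < θ < δ`. -/
def VirtLtAStrong (δ κ A : u.V) : Prop :=
  ∀ θ, RegUncW u.mem θ → u.mem κ θ → u.mem θ δ → VirtAStrongAt u θ κ A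

/-- `κ` is faintly `(<δ, A)`-strong. -/
def FaintLtAStrong (δ κ A : u.V) : Prop :=
  ∀ θ, RegUncW u.mem θ → u.mem κ θ → u.mem θ δ → FaintAStrongAt u θ κ A

/-- `κ` is virtually `(<δ, A)`-supercompact. -/
def VirtLtASupercompact (δ κ A : u.V) : Prop :=
  ∀ θ, RegUncW u.mem θ → u.mem κ θ → u.mem θ δ → VirtASupercompactAt u θ κ A

/-- `κ` is virtually `(<δ, A)`-extendible. -/
def VirtLtAExtendible (δ κ A : u.V) : Prop :=
  ∀ θ, RegUncW u.mem θ → u.mem κ θ → u.mem θ δ → VirtAExtendibleAt u θ κ A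

/-- `δ` is virtually Woodin: for every `A ⊆ H_δ` there is a virtually `(<δ, A)`-strong
cardinal `κ < δ`. -/
def VirtWoodin (δ : u.V) : Prop := ∀ A, (∀ x, u.mem x A → InHW u.mem δ x) →
  ∃ κ, u.mem κ δ ∧ VirtLtAStrong u δ κ A

/-- `δ` is faintly Woodin. -/
def FaintWoodin (δ : u.V) : Prop := ∀ A, (∀ x, u.mem x A → InHW u.mem δ x) →
  ∃ κ, u.mem κ δ ∧ FaintLtAStrong u δ κ A

/- ### Class (`On`) versions, for GBC statements; classes are predicates on the universe -/

/-- `κ` is virtually `(θ, A)`-pre-strong for a class `A`. -/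
def VirtClassPreStrongAt (θ κ : u.V) (A : u.V → Prop) : Prop := ∃ h, IsHW u.mem θ h ∧
  ∃ (N : u.V) (D : GenEmb u h A (fun _ => False)), D.tgtIs N ∧ TransW u.mem N ∧
    D.crit κ ∧ D.hSub ∧ D.bMatch A

/-- `κ` is virtually `(θ, A)`-strong for a class `A`. -/
def VirtClassStrongAt (θ κ : u.V) (A : u.V → Prop) : Prop := ∃ h, IsHW u.mem θ h ∧
  ∃ (N : u.V) (D : GenEmb u h A (fun _ => False)), D.tgtIs N ∧ TransW u.mem N ∧
    D.crit κ ∧ D.jGT κ θ ∧ D.hSub ∧ D.bMatch A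

/-- `κ` is faintly `(θ, A)`-pre-strong for a class `A`. -/
def FaintClassPreStrongAt (θ κ : u.V) (A : u.V → Prop) : Prop := ∃ h, IsHW u.mem θ h ∧
  ∃ D : GenEmb u h A (fun _ => False), D.tgtTrans ∧ D.crit κ ∧ D.hSub ∧ D.bMatch A

/-- `On` is virtually pre-Woodin: for every class `A` there is a cardinal `κ` which is
virtually `(θ, A)`-pre-strong for all regular `θ > κ`. -/
def OnVirtPreWoodin : Prop := ∀ A : u.V → Prop, ∃ κ, IsCardW u.mem κ ∧
  ∀ θ, RegUncW u.mem θ → u.mem κ θ → VirtClassPreStrongAt u θ κ A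

/-- `On` is faintly pre-Woodin. -/
def OnFaintPreWoodin : Prop := ∀ A : u.V → Prop, ∃ κ, IsCardW u.mem κ ∧
  ∀ θ, RegUncW u.mem θ → u.mem κ θ → FaintClassPreStrongAt u θ κ A

/-- `On` is virtually Woodin. -/
def OnVirtWoodin : Prop := ∀ A : u.V → Prop, ∃ κ, IsCardW u.mem κ ∧
  ∀ θ, RegUncW u.mem θ → u.mem κ θ → VirtClassStrongAt u θ κ A

/- ### Berkeley cardinals -/

/-- `δ` is virtually proto-Berkeley: for every transitive set `M ⊇ δ` there is a generic
elementary embedding `π : M → M` with `crit π < δ`. -/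
def VirtProtoBerkeley (δ : u.V) : Prop := ∀ M, TransW u.mem M → SubW u.mem δ M →
  ∃ (D : PlainEmb u M) (κ : u.V), D.tgtIs M ∧ D.crit κ ∧ u.mem κ δ

/-- `δ` is virtually Berkeley: for every transitive set `M ⊇ δ` and every `η < δ` there is
a generic elementary embedding `π : M → M` with `η < crit π < δ`. -/
def VirtBerkeley (δ : u.V) : Prop := ∀ M, TransW u.mem M → SubW u.mem δ M → ∀ η, u.mem η δ →
  ∃ (D : PlainEmb u M) (κ : u.V), D.tgtIs M ∧ D.crit κ ∧ u.mem η κ ∧ u.mem κ δ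

/-- `δ` is virtually club Berkeley: for every transitive set `M ⊇ δ` and every club
`C ⊆ δ` there is a generic elementary embedding `π : M → M` with `crit π ∈ C`. -/
def VirtClubBerkeley (δ : u.V) : Prop := ∀ M, TransW u.mem M → SubW u.mem δ M →
  ∀ C, ClubInW u.mem C δ →
    ∃ (D : PlainEmb u M) (κ : u.V), D.tgtIs M ∧ D.crit κ ∧ u.mem κ C

/- ### The virtual Vopěnka principle -/

/-- `m` is (an ordered pair coding) a first-order structure with universe `a` and binary
relation `rel` (structures in an arbitrary common language are rendered, by the standard
coding, as structures with a single binary relation). -/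
def GraphStr (m a rel : u.V) : Prop := IsOPair u.mem m a rel ∧
  ∀ z, u.mem z rel → ∃ x y, u.mem x a ∧ u.mem y a ∧ IsOPair u.mem z x y

/-- `C` is a proper class (not included in any set). -/
def ProperClass (C : u.V → Prop) : Prop := ¬ ∃ s, ∀ m, C m → u.mem m s

end Notions

/-- A generic elementary embedding between two structures `(a, rel)` and `(a', rel')` of
the ground universe `u`, existing in (i.e. coded by an element of) a set-forcing
extension of `u`. -/
structure GenGraphEmb (u : ZFUniv.{u}) (a rel a' rel' : u.V) : Type (u + 1) where
  E : Extension u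
  emb : ElemEmb (u.mem · a) (RelIn u.mem rel) (fun _ => False) (fun _ => False)
    (E.W.mem · (E.inc a')) (RelIn E.W.mem (E.inc rel')) (fun _ => False) (fun _ => False)
  code : E.W.V
  code_fun : IsFuncW E.W.mem code (E.inc a) (E.inc a')
  code_graph : ∀ x (hx : u.mem x a), FApp E.W.mem code (E.inc x) (eApp emb ⟨x, hx⟩).1

/-- The virtual Vopěnka Principle: for every (proper) class `C` of structures in a common
language there are distinct `m, m' ∈ C` with a generic elementary embedding from `m`
to `m'`. -/
def VirtVP (u : ZFUniv.{u}) : Prop := ∀ C : u.V → Prop,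
  (∀ m, C m → ∃ a rel, GraphStr u m a rel) → ProperClass u C →
  ∃ m m' a rel a' rel', C m ∧ C m' ∧ m ≠ m' ∧ GraphStr u m a rel ∧ GraphStr u m' a' rel' ∧
    Nonempty (GenGraphEmb u a rel a' rel')

/- ### The cumulative hierarchy, natural sequences and the Vopěnka filter -/

/-- `IsVrank u α v` says `v = V_α`, the `α`-th level of the cumulative hierarchy
(`V_α = ⋃_{β ∈ α} 𝒫(V_β)`), defined by well-founded recursion. -/
def IsVrank (u : ZFUniv.{u}) : u.V → u.V → Prop :=
  u.wf.fix (C := fun _ => u.V → Prop)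
    (fun α ih v => ∀ x, u.mem x v ↔ ∃ β, ∃ hβ : u.mem β α, ∃ w, ih β hβ w ∧ SubW u.mem x w)

/-- A natural `On`-sequence of structures `M_α = (V_{f(α)}, ∈, {α}, R_α)`, given by an
indexing (class) function `f = F` and (class-many) unary relations `R_α ⊆ V_{f(α)}`;
`Vr α` realizes the level `V_{f(α)}`. -/
structure NatSeq (u : ZFUniv.{u}) : Type (u + 1) where
  F : u.V → u.V
  R : u.V → u.V
  Vr : u.V → u.V
  F_ord : ∀ α, OrdW u.mem α → OrdW u.mem (F α)
  F_gt : ∀ α, OrdW u.mem α → u.mem α (F α)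
  F_mono : ∀ α β, OrdW u.mem β → u.mem α β → ordLe u.mem (F α) (F β)
  Vr_spec : ∀ α, OrdW u.mem α → IsVrank u (F α) (Vr α)
  R_sub : ∀ α, OrdW u.mem α → SubW u.mem (R α) (Vr α)

/-- A generic elementary embedding `M_α → M_β` between two structures of a natural
sequence, where `M_α = (V_{f(α)}, ∈, R_α, {α})`. -/
structure GenNatEmb (u : ZFUniv.{u}) (S : NatSeq u) (α β : u.V) : Type (u + 1) where
  E : Extension u
  emb : ElemEmb (u.mem · (S.Vr α)) u.mem (u.mem · (S.R α)) (· = α)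
    (E.W.mem · (E.inc (S.Vr β))) E.W.mem (E.W.mem · (E.inc (S.R β))) (· = E.inc β)
  code : E.W.V
  code_fun : IsFuncW E.W.mem code (E.inc (S.Vr α)) (E.inc (S.Vr β))
  code_graph : ∀ x (hx : u.mem x (S.Vr α)), FApp E.W.mem code (E.inc x) (eApp emb ⟨x, hx⟩).1

/-- The critical point of a generic embedding between members of a natural sequence. -/
def GenNatEmb.crit {u : ZFUniv.{u}} {S : NatSeq u} {α β : u.V} (D : GenNatEmb u S α β)
    (κ : u.V) : Prop :=
  OrdW u.mem κ ∧ ∃ hκ : u.mem κ (S.Vr α),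
    (∀ γ (hγ : u.mem γ (S.Vr α)), u.mem γ κ → (eApp D.emb ⟨γ, hγ⟩).1 = D.E.inc γ) ∧
    (eApp D.emb ⟨κ, hκ⟩).1 ≠ D.E.inc κ

/-- The class `X` belongs to the virtual Vopěnka filter on `On`: there is a natural
sequence such that the critical point of any generic elementary embedding `M_α → M_β`
(`α < β`) lies in `X`. -/
def InVopFilter (u : ZFUniv.{u}) (X : u.V → Prop) : Prop := ∃ S : NatSeq u,
  ∀ α β, OrdW u.mem α → OrdW u.mem β → u.mem α β →
    ∀ (D : GenNatEmb u S α β) (κ : u.V), D.crit κ → X κ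

/-- `C` is a class club of ordinals. -/
def ClassClub (u : ZFUniv.{u}) (C : u.V → Prop) : Prop := (∀ x, C x → OrdW u.mem x) ∧
  (∀ α, OrdW u.mem α → ∃ β, C β ∧ u.mem α β) ∧
  (∀ γ, OrdW u.mem γ → (∃ x, u.mem x γ) →
    (∀ α, u.mem α γ → ∃ β, C β ∧ u.mem α β ∧ u.mem β γ) → C γ)

/-- `On` is Mahlo: every class club of ordinals contains a regular cardinal. -/
def OnMahlo (u : ZFUniv.{u}) : Prop :=
  ∀ C : u.V → Prop, ClassClub u C → ∃ κ, C κ ∧ RegularInfW u.mem κ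

/- ### The constructible universe -/

/-- `x` is a definable (with parameters) subset of the structure `(m, ∈)`. -/
def DefOverSet (u : ZFUniv.{u}) (m x : u.V) : Prop := SubW u.mem x m ∧
  ∃ (n : ℕ) (φ : L3.BoundedFormula (Fin n) 1) (prm : Fin n → {y : u.V // u.mem y m}),
    ∀ y (hy : u.mem y m),
      u.mem y x ↔ RealizeSub (u.mem · m) u.mem φ prm (fun _ => ⟨y, hy⟩)

/-- `IsL u α ℓ` says `ℓ = L_α`, the `α`-th level of Gödel's constructible hierarchy
(`L_α = ⋃_{β ∈ α} Def(L_β)`), defined by well-founded recursion. -/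
def IsL (u : ZFUniv.{u}) : u.V → u.V → Prop :=
  u.wf.fix (C := fun _ => u.V → Prop)
    (fun α ih ℓ => ∀ x, u.mem x ℓ ↔ ∃ β, ∃ hβ : u.mem β α, ∃ ℓβ, ih β hβ ℓβ ∧ DefOverSet u ℓβ x)

/-- The constructible universe `L` of `u`, as a class. -/
def ClassL (u : ZFUniv.{u}) (x : u.V) : Prop := ∃ α ℓ, OrdW u.mem α ∧ IsL u α ℓ ∧ u.mem x ℓ

/-- The universe `u` satisfies `V = L`. -/
def VeqL (u : ZFUniv.{u}) : Prop := ∀ x, ClassL u x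

end VLC

namespace VLC

/- ### Auxiliary development for Proposition 5.3 -/

section Chunk1

universe w

variable {α : Type} {l : ℕ}

/-- Lift a term over `α ⊕ Fin l` to `(α ⊕ Fin 1) ⊕ Fin l`. -/
def tlift (t : L3.Term (α ⊕ Fin l)) : L3.Term ((α ⊕ Fin 1) ⊕ Fin l) :=
  t.relabel (Sum.map Sum.inl id)

/-- Lift a term over `α ⊕ Fin l` to `(α ⊕ Fin 1) ⊕ Fin (l+1)`. -/
def tliftS (t : L3.Term (α ⊕ Fin l)) : L3.Term ((α ⊕ Fin 1) ⊕ Fin (l + 1)) :=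
  t.relabel (Sum.map Sum.inl Fin.castSucc)

/-- The parameter variable. -/
def mvarT : L3.Term ((α ⊕ Fin 1) ⊕ Fin l) := Term.var (Sum.inl (Sum.inr 0))

/-- Atomic membership formula. -/
def memF (t s : L3.Term ((α ⊕ Fin 1) ⊕ Fin l)) : L3.BoundedFormula (α ⊕ Fin 1) l :=
  BoundedFormula.rel Rels.mem ![t, s]

/-- Relativization of a formula: quantifiers are restricted to elements of the
parameter, `u1 x` is replaced by `∃ p (x ∈ p ∧ m ∈ p ∧ x ≠ m)`, `u2` by `⊥`. -/
def Rel : ∀ {l : ℕ}, L3.BoundedFormula α l → L3.BoundedFormula (α ⊕ Fin 1) l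
  | _, .falsum => .falsum
  | _, .equal t₁ t₂ => .equal (tlift t₁) (tlift t₂)
  | _, .rel R ts =>
    match R, ts with
    | .mem, ts => memF (tlift (ts 0)) (tlift (ts 1))
    | .u1, ts =>
        (((memF (tliftS (ts 0)) (Term.var (Sum.inr (Fin.last _)))) ⊓
          ((memF mvarT (Term.var (Sum.inr (Fin.last _)))) ⊓
           ((tliftS (ts 0)).bdEqual mvarT).not)).ex)
    | .u2, _ => .falsum
  | _, .imp f g => .imp (Rel f) (Rel g)
  | _, .all f => .all ((memF (Term.var (Sum.inr (Fin.last _))) mvarT).imp (Rel f))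

lemma term_realize_val {U : Type w} {d : U → Prop} {β : Type*} (S : L3.Structure U)
    (S' : L3.Structure {x : U // d x}) (v : β → {x : U // d x}) (t : L3.Term β) :
    @Term.realize L3 U S β (fun b => (v b).1) t = (@Term.realize L3 _ S' β v t).1 := by
  cases t with
  | var => rfl
  | func f => exact nomatch f

end Chunk1

section Chunk2

universe w

variable {α : Type}

lemma L3_term_var {β : Type*} (t : L3.Term β) : ∃ b, t = Term.var b := by
  cases t with
  | var b => exact ⟨b, rfl⟩
  | func f => exact nomatch f

/-- Value of the lifted valuation at a mapped variable. -/
lemma val_comp {U : Type w} {dN dM : U → Prop} {m : U} (hmN : dN m)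
    (hMN : ∀ x, dM x → dN x) {k : ℕ} (v : α → {x // dM x}) (xs : Fin k → {x // dM x})
    (b : α ⊕ Fin k) :
    (Sum.elim (Sum.elim (fun i => (⟨(v i).1, hMN _ (v i).2⟩ : {x // dN x}))
        (fun _ => ⟨m, hmN⟩))
      (fun i => (⟨(xs i).1, hMN _ (xs i).2⟩ : {x // dN x}))
      (Sum.map Sum.inl id b : (α ⊕ Fin 1) ⊕ Fin k)).1 =
    (Sum.elim v xs b).1 := by
  rcases b with a | j <;> rfl

lemma realize_memF {U : Type w} {d : U → Prop} {s : U → U → Prop} {B1 B2 : U → Prop} {k : ℕ}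
    (b c : (α ⊕ Fin 1) ⊕ Fin k) (v : α ⊕ Fin 1 → {x // d x}) (xs : Fin k → {x // d x}) :
    @BoundedFormula.Realize L3 _ (mstr d s B1 B2) _ _ (memF (Term.var b) (Term.var c)) v xs ↔
    s (Sum.elim v xs b).1 (Sum.elim v xs c).1 :=
  Iff.rfl

/-- Value of the lifted valuation at a `castSucc`-mapped variable, under a snoc. -/
lemma val_compS {U : Type w} {dN dM : U → Prop} {m : U} (hmN : dN m)
    (hMN : ∀ x, dM x → dN x) {k : ℕ} (v : α → {x // dM x}) (xs : Fin k → {x // dM x})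
    (p : {x // dN x}) (b : α ⊕ Fin k) :
    (Sum.elim (Sum.elim (fun i => (⟨(v i).1, hMN _ (v i).2⟩ : {x // dN x}))
        (fun _ => ⟨m, hmN⟩))
      (Fin.snoc (fun i => (⟨(xs i).1, hMN _ (xs i).2⟩ : {x // dN x})) p)
      (Sum.map Sum.inl Fin.castSucc b : (α ⊕ Fin 1) ⊕ Fin (k + 1))).1 =
    (Sum.elim v xs b).1 := by
  rcases b with a | j
  · rfl
  · simp [Fin.snoc_castSucc]

/-- Simp set facts for `mstr` relation maps. -/
lemma mstr_mem {U : Type w} {d : U → Prop} {s : U → U → Prop} {B1 B2 : U → Prop}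
    (vv : Fin 2 → {x // d x}) :
    @Structure.RelMap L3 _ (mstr d s B1 B2) 2 Rels.mem vv ↔ s (vv 0).1 (vv 1).1 := Iff.rfl

lemma mstr_u1 {U : Type w} {d : U → Prop} {s : U → U → Prop} {B1 B2 : U → Prop}
    (vv : Fin 1 → {x // d x}) :
    @Structure.RelMap L3 _ (mstr d s B1 B2) 1 Rels.u1 vv ↔ B1 (vv 0).1 := Iff.rfl

lemma BF_realize_rel {L : Language} {M : Type*} [L.Structure M] {α : Type*} {n k : ℕ}
    (R : L.Relations k) (ts : Fin k → L.Term (α ⊕ Fin n)) (v : α → M) (xs : Fin n → M) :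
    (BoundedFormula.rel R ts).Realize v xs ↔
      Structure.RelMap R (fun i => (ts i).realize (Sum.elim v xs)) := Iff.rfl

lemma BF_realize_mem {M : Type*} [L3.Structure M] {α : Type*} {n : ℕ}
    (ts : Fin 2 → L3.Term (α ⊕ Fin n)) (v : α → M) (xs : Fin n → M) :
    (BoundedFormula.rel (L := L3) Rels.mem ts).Realize v xs ↔
      Structure.RelMap (L := L3) Rels.mem (fun i => (ts i).realize (Sum.elim v xs)) := Iff.rfl

lemma realize_Rel {U : Type w} (s : U → U → Prop) (dN dM dA B1 B2 : U → Prop) (m : U)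
    (hmN : dN m) (hMN : ∀ x, dM x → dN x)
    (hM : ∀ x, dN x → (s x m ↔ dM x))
    (hA : ∀ x, dM x → (dA x ↔ ∃ p, dN p ∧ s x p ∧ s m p ∧ x ≠ m)) :
    ∀ {l : ℕ} (θ : L3.BoundedFormula α l) (v : α → {x // dM x}) (xs : Fin l → {x // dM x}),
      (@BoundedFormula.Realize L3 _ (mstr dM s dA (fun _ => False)) α l θ v xs ↔
       @BoundedFormula.Realize L3 _ (mstr dN s B1 B2) (α ⊕ Fin 1) l (Rel θ)
         (Sum.elim (fun i => (⟨(v i).1, hMN _ (v i).2⟩ : {x // dN x})) (fun _ => ⟨m, hmN⟩))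
         (fun i => ⟨(xs i).1, hMN _ (xs i).2⟩)) := by
  intro l θ
  induction θ with
  | falsum => intro v xs; exact Iff.rfl
  | equal t₁ t₂ =>
    intro v xs
    obtain ⟨b₁, rfl⟩ := L3_term_var t₁
    obtain ⟨b₂, rfl⟩ := L3_term_var t₂
    show (Sum.elim v xs b₁ = Sum.elim v xs b₂) ↔
      (Sum.elim _ _ (Sum.map Sum.inl id b₁) : {x // dN x}) =
        Sum.elim _ _ (Sum.map Sum.inl id b₂)
    rw [Subtype.ext_iff, Subtype.ext_iff (p := dN), val_comp hmN hMN v xs b₁,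
      val_comp hmN hMN v xs b₂]
  | rel R ts =>
    intro v xs
    cases R with
    | mem =>
      obtain ⟨b₀, h₀⟩ := L3_term_var (ts 0)
      obtain ⟨b₁, h₁⟩ := L3_term_var (ts 1)
      rw [show Rel (.rel Rels.mem ts) = memF (tlift (ts 0)) (tlift (ts 1)) from rfl, h₀, h₁,
        show tlift (α := α) (Term.var b₀) = Term.var (Sum.map Sum.inl id b₀) from rfl,
        show tlift (α := α) (Term.var b₁) = Term.var (Sum.map Sum.inl id b₁) from rfl,
        realize_memF, val_comp hmN hMN v xs b₀, val_comp hmN hMN v xs b₁]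
      constructor
      · intro hL
        have hL' : s (@Term.realize L3 _ (mstr dM s dA (fun _ => False)) _
            (Sum.elim v xs) (ts 0)).1 (@Term.realize L3 _ (mstr dM s dA (fun _ => False)) _
            (Sum.elim v xs) (ts 1)).1 := hL
        rw [h₀, h₁] at hL'
        simpa only [Term.realize_var] using hL'
      · intro hR
        show s (@Term.realize L3 _ (mstr dM s dA (fun _ => False)) _
            (Sum.elim v xs) (ts 0)).1 (@Term.realize L3 _ (mstr dM s dA (fun _ => False)) _
            (Sum.elim v xs) (ts 1)).1
        rw [h₀, h₁]
        simpa only [Term.realize_var] using hR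
    | u2 => exact Iff.rfl
    | u1 =>
      obtain ⟨b₀, h₀⟩ := L3_term_var (ts 0)
      have hdm : dM (Sum.elim v xs b₀).1 := (Sum.elim v xs b₀).2
      have hL : @BoundedFormula.Realize L3 _ (mstr dM s dA (fun _ => False)) α _
          (.rel Rels.u1 ts) v xs ↔ dA (Sum.elim v xs b₀).1 := by
        constructor
        · intro h
          have h' : dA (@Term.realize L3 _ (mstr dM s dA (fun _ => False)) _
              (Sum.elim v xs) (ts 0)).1 := h
          rw [h₀] at h'
          simpa only [Term.realize_var] using h'
        · intro h
          show dA (@Term.realize L3 _ (mstr dM s dA (fun _ => False)) _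
              (Sum.elim v xs) (ts 0)).1
          rw [h₀]
          simpa only [Term.realize_var] using h
      rw [hL, hA _ hdm]
      letI SN : L3.Structure {x // dN x} := mstr dN s B1 B2
      have hRel : Rel (.rel Rels.u1 ts) =
        (((memF (tliftS (ts 0)) (Term.var (Sum.inr (Fin.last _)))) ⊓
          ((memF mvarT (Term.var (Sum.inr (Fin.last _)))) ⊓
           ((tliftS (ts 0)).bdEqual mvarT).not)).ex) := rfl
      rw [hRel, h₀, show tliftS (α := α) (Term.var b₀) =
        Term.var (Sum.map Sum.inl Fin.castSucc b₀) from rfl,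
        show mvarT (α := α) = Term.var (Sum.inl (Sum.inr 0)) from rfl]
      rw [BoundedFormula.realize_ex]
      simp only [memF, BoundedFormula.realize_inf, BoundedFormula.realize_not,
        BoundedFormula.realize_bdEqual, BF_realize_rel, BF_realize_mem, Term.realize_var,
        Matrix.cons_val_zero, Matrix.cons_val_one, Matrix.head_cons, mstr_mem,
        Sum.elim_inl, Sum.elim_inr, Fin.snoc_last]
      constructor
      · rintro ⟨p, hpN, hxp, hmp, hne⟩
        refine ⟨⟨p, hpN⟩, ?_, ?_, ?_⟩
        · rw [val_compS hmN hMN v xs ⟨p, hpN⟩ b₀]; exact hxp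
        · exact hmp
        · intro hEq
          apply hne
          rw [← val_compS hmN hMN v xs ⟨p, hpN⟩ b₀]
          exact congrArg Subtype.val hEq
      · rintro ⟨p, h1, h2, h3⟩
        refine ⟨p.1, p.2, ?_, h2, ?_⟩
        · rw [← val_compS hmN hMN v xs p b₀]; exact h1
        · intro hEq
          apply h3
          apply Subtype.ext
          rw [val_compS hmN hMN v xs p b₀]
          exact hEq
  | imp f g ihf ihg =>
    intro v xs
    exact imp_congr (ihf v xs) (ihg v xs)
  | all f ih =>
    intro v xs
    have hfe : ∀ b : {x // dM x},
        (fun i => (⟨((Fin.snoc xs b : Fin _ → {x // dM x}) i).1,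
            hMN _ ((Fin.snoc xs b : Fin _ → {x // dM x}) i).2⟩ : {x // dN x})) =
        Fin.snoc (fun i => (⟨(xs i).1, hMN _ (xs i).2⟩ : {x // dN x})) ⟨b.1, hMN _ b.2⟩ := by
      intro b; funext i
      refine Fin.lastCases ?_ (fun j => ?_) i
      · simp only [Fin.snoc_last]
      · simp only [Fin.snoc_castSucc]
    constructor
    · intro H a ha
      have hg : s a.1 m := by
        have h2 := (realize_memF (Sum.inr (Fin.last _)) (Sum.inl (Sum.inr 0)) _ _).1 ha
        simpa [Fin.snoc_last] using h2
      have hdM : dM a.1 := (hM a.1 a.2).1 hg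
      have h2 := (ih v (Fin.snoc xs ⟨a.1, hdM⟩)).1 (H ⟨a.1, hdM⟩)
      rw [hfe ⟨a.1, hdM⟩] at h2
      exact h2
    · intro H b
      refine (ih v (Fin.snoc xs b)).2 ?_
      rw [hfe b]
      refine H ⟨b.1, hMN _ b.2⟩ ?_
      rw [show mvarT (α := α) = Term.var (Sum.inl (Sum.inr 0)) from rfl, realize_memF]
      simpa [Fin.snoc_last] using (hM b.1 (hMN _ b.2)).2 b.2

end Chunk2

section Chunk3

variable {u : ZFUniv.{u}}

lemma memIrrefl (u : ZFUniv.{u}) (x : u.V) : ¬ u.mem x x :=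
  fun h => (u.wf.asymmetric x x h) h

lemma memAsymm (u : ZFUniv.{u}) {x y : u.V} (h : u.mem x y) : ¬ u.mem y x :=
  u.wf.asymmetric x y h

lemma memStr_mem {U : Type*} {s : U → U → Prop} (vv : Fin 2 → U) :
    @Structure.RelMap L3 _ (memStr s) 2 Rels.mem vv ↔ s (vv 0) (vv 1) := Iff.rfl

/-- The formula `∀ z (z ∈ y ↔ (z = x ∨ z = prm))`, saying `y = {x, prm}`. -/
def upairFml : L3.BoundedFormula (Fin 1) 2 :=
  .all ((BoundedFormula.rel Rels.mem ![Term.var (Sum.inr 2), Term.var (Sum.inr 1)]).iff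
    ((BoundedFormula.equal (Term.var (Sum.inr 2)) (Term.var (Sum.inr 0))) ⊔
     (BoundedFormula.equal (Term.var (Sum.inr 2)) (Term.var (Sum.inl 0)))))

lemma realize_upairFml (M x y : u.V) :
    RealizeIn u.mem upairFml ![M] ![x, y] ↔ IsUPair u.mem y x M := by
  letI : L3.Structure u.V := memStr u.mem
  unfold RealizeIn upairFml IsUPair
  rw [BoundedFormula.realize_all]
  refine forall_congr' fun z => ?_
  rw [BoundedFormula.realize_iff, BoundedFormula.realize_sup, BF_realize_mem, memStr_mem]
  simp only [Fin.snoc, BoundedFormula.Realize, Term.realize_var, Sum.elim_inl, Sum.elim_inr]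
  norm_num
  exact Iff.rfl

/-- Construction of the coding set `N = M ∪ {M, {M}} ∪ {{x, M} : x ∈ A}`. -/
lemma exists_codeSet (u : ZFUniv.{u}) (M A : u.V) :
    ∃ N sM P : u.V,
      (∀ z, u.mem z sM ↔ z = M) ∧
      (∀ z, u.mem z P ↔ ∃ x, u.mem x A ∧ IsUPair u.mem z x M) ∧
      (∀ z, u.mem z N ↔ (u.mem z M ∨ z = M ∨ z = sM ∨ u.mem z P)) := by
  obtain ⟨sM, hsM⟩ := u.pairing M M
  have hsM' : ∀ z, u.mem z sM ↔ z = M := by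
    intro z; rw [hsM z]; exact or_self_iff
  -- the pair set P via replacement
  have hfun : ∀ x y y', u.mem x A → RealizeIn u.mem upairFml ![M] ![x, y] →
      RealizeIn u.mem upairFml ![M] ![x, y'] → y = y' := by
    intro x y y' _ h1 h2
    rw [realize_upairFml] at h1 h2
    exact u.extensionality y y' fun z => (h1 z).trans (h2 z).symm
  obtain ⟨P, hP⟩ := u.replacement 1 upairFml ![M] A hfun
  have hP' : ∀ z, u.mem z P ↔ ∃ x, u.mem x A ∧ IsUPair u.mem z x M := by
    intro z
    rw [hP z]
    exact exists_congr fun x => and_congr_right fun _ => realize_upairFml M x z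
  -- s1 = {M, sM}
  obtain ⟨s1, hs1⟩ := u.pairing M sM
  obtain ⟨q1, hq1⟩ := u.pairing M s1
  obtain ⟨q2, hq2⟩ := u.pairing s1 P
  obtain ⟨q3, hq3⟩ := u.pairing q1 q2
  obtain ⟨T, hT⟩ := u.unions q3
  obtain ⟨N, hN⟩ := u.unions T
  have hT' : ∀ z, u.mem z T ↔ (z = M ∨ z = s1 ∨ z = P) := by
    intro z
    rw [hT z]
    constructor
    · rintro ⟨y, hy, hzy⟩
      rcases (hq3 y).1 hy with rfl | rfl
      · rcases (hq1 z).1 hzy with rfl | rfl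
        · exact Or.inl rfl
        · exact Or.inr (Or.inl rfl)
      · rcases (hq2 z).1 hzy with rfl | rfl
        · exact Or.inr (Or.inl rfl)
        · exact Or.inr (Or.inr rfl)
    · rintro (rfl | rfl | rfl)
      · exact ⟨q1, (hq3 q1).2 (Or.inl rfl), (hq1 z).2 (Or.inl rfl)⟩
      · exact ⟨q1, (hq3 q1).2 (Or.inl rfl), (hq1 z).2 (Or.inr rfl)⟩
      · exact ⟨q2, (hq3 q2).2 (Or.inr rfl), (hq2 z).2 (Or.inr rfl)⟩
  refine ⟨N, sM, P, hsM', hP', fun z => ?_⟩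
  rw [hN z]
  constructor
  · rintro ⟨y, hy, hzy⟩
    rcases (hT' y).1 hy with rfl | rfl | rfl
    · exact Or.inl hzy
    · rcases (hs1 z).1 hzy with rfl | rfl
      · exact Or.inr (Or.inl rfl)
      · exact Or.inr (Or.inr (Or.inl rfl))
    · exact Or.inr (Or.inr (Or.inr hzy))
  · rintro (h | rfl | rfl | h)
    · exact ⟨M, (hT' M).2 (Or.inl rfl), h⟩
    · exact ⟨s1, (hT' s1).2 (Or.inr (Or.inl rfl)), (hs1 z).2 (Or.inl rfl)⟩
    · exact ⟨s1, (hT' s1).2 (Or.inr (Or.inl rfl)), (hs1 z).2 (Or.inr rfl)⟩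
    · exact ⟨P, (hT' P).2 (Or.inr (Or.inr rfl)), h⟩

end Chunk3

section Chunk4

variable {u : ZFUniv.{u}} {M A N sM P : u.V}
  (hsM : ∀ z, u.mem z sM ↔ z = M)
  (hP : ∀ z, u.mem z P ↔ ∃ x, u.mem x A ∧ IsUPair u.mem z x M)
  (hN : ∀ z, u.mem z N ↔ (u.mem z M ∨ z = M ∨ z = sM ∨ u.mem z P))
  (hMt : TransW u.mem M) (hAM : SubW u.mem A M)

include hsM hP hN hMt hAM

lemma codeN_trans : TransW u.mem N := by
  intro z y hz hy
  rcases (hN z).1 hz with h | rfl | rfl | h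
  · exact (hN y).2 (Or.inl (hMt z y h hy))
  · exact (hN y).2 (Or.inl hy)
  · rcases (hsM y).1 hy with rfl
    exact (hN y).2 (Or.inr (Or.inl rfl))
  · obtain ⟨x, hxA, hup⟩ := (hP z).1 h
    rcases (hup y).1 hy with rfl | rfl
    · exact (hN y).2 (Or.inl (hAM y hxA))
    · exact (hN y).2 (Or.inr (Or.inl rfl))

lemma codeN_MmemN : u.mem M N := (hN M).2 (Or.inr (Or.inl rfl))

lemma codeN_sMmemN : u.mem sM N := (hN sM).2 (Or.inr (Or.inr (Or.inl rfl)))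

lemma codeN_MmemsM : u.mem M sM := (hsM M).2 rfl

/-- Containers of `M` in `N` are `sM` or pairs from `P`. -/
lemma codeN_containers {p : u.V} (hpN : u.mem p N) (hMp : u.mem M p) :
    p = sM ∨ ∃ x, u.mem x A ∧ IsUPair u.mem p x M := by
  rcases (hN p).1 hpN with h | rfl | rfl | h
  · exact absurd h (memAsymm u hMp)
  · exact absurd hMp (memIrrefl u _)
  · exact Or.inl rfl
  · exact Or.inr ((hP p).1 h)

/-- Containers of `M` in `N` are `∈`-maximal in `N`. -/
lemma codeN_maximal {p : u.V} (hpN : u.mem p N) (hMp : u.mem M p) :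
    ∀ w, u.mem w N → ¬ u.mem p w := by
  intro w hwN hpw
  rcases (hN w).1 hwN with h | rfl | rfl | h
  · exact memAsymm u hMp (hMt w p h hpw)
  · exact memAsymm u hMp hpw
  · rcases (hsM p).1 hpw with rfl
    exact memIrrefl u p hMp
  · obtain ⟨x, hxA, hup⟩ := (hP w).1 h
    rcases (hup p).1 hpw with rfl | rfl
    · exact memAsymm u hMp (hAM p hxA)
    · exact memIrrefl u p hMp

/-- `M` is the unique element of `N` all of whose containers are maximal. -/
lemma codeN_unique {m₀ : u.V} (hm₀ : u.mem m₀ N)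
    (hex : ∃ p, u.mem p N ∧ u.mem m₀ p)
    (hmax : ∀ p, u.mem p N → u.mem m₀ p → ∀ w, u.mem w N → ¬ u.mem p w) :
    m₀ = M := by
  rcases (hN m₀).1 hm₀ with h | rfl | heq | h
  · exact absurd (codeN_MmemsM hsM hP hN hMt hAM)
      (hmax M (codeN_MmemN hsM hP hN hMt hAM) h sM (codeN_sMmemN hsM hP hN hMt hAM))
  · rfl
  · have hMm : u.mem M m₀ := by rw [heq]; exact codeN_MmemsM hsM hP hN hMt hAM
    obtain ⟨p, hpN, hmp⟩ := hex
    rcases (hN p).1 hpN with h | rfl | peq | h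
    · exact absurd (hMt p m₀ h hmp) (memAsymm u hMm)
    · exact absurd hmp (memAsymm u hMm)
    · refine (hsM m₀).1 ?_
      rw [← peq]; exact hmp
    · obtain ⟨x, hxA, hup⟩ := (hP p).1 h
      rcases (hup m₀).1 hmp with xeq | meq
      · refine absurd ?_ (memAsymm u hMm)
        rw [xeq]; exact hAM x hxA
      · exact meq
  · obtain ⟨x, hxA, hup⟩ := (hP m₀).1 h
    have hMm₀ : u.mem M m₀ := (hup M).2 (Or.inr rfl)
    obtain ⟨p, hpN, hmp⟩ := hex
    rcases (hN p).1 hpN with h' | rfl | rfl | h'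
    · exact absurd (hMt p m₀ h' hmp) (memAsymm u hMm₀)
    · exact absurd hmp (memAsymm u hMm₀)
    · rcases (hsM m₀).1 hmp with rfl
      exact absurd hMm₀ (memIrrefl u _)
    · obtain ⟨y, hyA, hup'⟩ := (hP p).1 h'
      rcases (hup' m₀).1 hmp with rfl | rfl
      · exact absurd (hAM m₀ hyA) (memAsymm u hMm₀)
      · exact absurd hMm₀ (memIrrefl u _)

/-- Characterization of `A` inside `N`. -/
lemma codeN_psi {x : u.V} (hxN : u.mem x N) :
    u.mem x A ↔ ∃ p, u.mem p N ∧ u.mem x p ∧ u.mem M p ∧ x ≠ M := by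
  constructor
  · intro hxA
    obtain ⟨pr, hpr⟩ := u.pairing x M
    have hprP : u.mem pr P := (hP pr).2 ⟨x, hxA, hpr⟩
    refine ⟨pr, (hN pr).2 (Or.inr (Or.inr (Or.inr hprP))), (hpr x).2 (Or.inl rfl),
      (hpr M).2 (Or.inr rfl), ?_⟩
    rintro rfl
    exact memIrrefl u x (hAM x hxA)
  · rintro ⟨p, hpN, hxp, hMp, hne⟩
    rcases codeN_containers hsM hP hN hMt hAM hpN hMp with rfl | ⟨y, hyA, hup⟩
    · exact absurd ((hsM x).1 hxp) hne
    · rcases (hup x).1 hxp with rfl | rfl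
      · exact hyA
      · exact absurd rfl hne

end Chunk4

section Chunk5

/-- The formula asserting that `x₀` is contained in some element, and all its containers
are `∈`-maximal; in the coding structure `N` this uniquely defines `M`. -/
def phiM : L3.Formula (Fin 1) :=
  ((BoundedFormula.rel Rels.mem ![Term.var (Sum.inl 0), Term.var (Sum.inr 0)]).ex) ⊓
  (.all ((BoundedFormula.rel Rels.mem ![Term.var (Sum.inl 0), Term.var (Sum.inr 0)]).imp
    (.all ((BoundedFormula.rel Rels.mem
      ![Term.var (Sum.inr 0), Term.var (Sum.inr 1)]).not))))

lemma realize_phiM {U : Type w} {s : U → U → Prop} {dN B1 B2 : U → Prop} (a : {x // dN x}) :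
    @Formula.Realize L3 _ (mstr dN s B1 B2) _ phiM ![a] ↔
    ((∃ p : {x // dN x}, s a.1 p.1) ∧
     ∀ p : {x // dN x}, s a.1 p.1 → ∀ w : {x // dN x}, ¬ s p.1 w.1) := by
  letI : L3.Structure {x // dN x} := mstr dN s B1 B2
  unfold phiM Formula.Realize
  rw [BoundedFormula.realize_inf, BoundedFormula.realize_ex]
  apply and_congr
  · refine exists_congr fun p => ?_
    rw [BF_realize_mem, mstr_mem]
    simp [Fin.snoc]
  · rw [BoundedFormula.realize_all]
    refine forall_congr' fun p => ?_
    rw [BoundedFormula.realize_imp, BF_realize_mem, mstr_mem, BoundedFormula.realize_all]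
    apply imp_congr
    · simp [Fin.snoc]
    · refine forall_congr' fun w => ?_
      rw [BoundedFormula.realize_not, BF_realize_mem, mstr_mem]
      simp [Fin.snoc]

end Chunk5

section Chunk6

lemma opair_inj {V : Type*} {r : V → V → Prop} {z a b a' b' : V}
    (h1 : IsOPair r z a b) (h2 : IsOPair r z a' b') : a = a' ∧ b = b' := by
  obtain ⟨sa, sab, ha, hab, hz⟩ := h1
  obtain ⟨sa', sab', ha', hab', hz'⟩ := h2
  have mem_sa : ∀ x, r x sa ↔ x = a := fun x => (ha x).trans or_self_iff
  have mem_sa' : ∀ x, r x sa' ↔ x = a' := fun x => (ha' x).trans or_self_iff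
  have hsa' : sa' = sa ∨ sa' = sab := (hz sa').1 ((hz' sa').2 (Or.inl rfl))
  have hsab' : sab' = sa ∨ sab' = sab := (hz sab').1 ((hz' sab').2 (Or.inr rfl))
  have hsab : sab = sa' ∨ sab = sab' := (hz' sab).1 ((hz sab).2 (Or.inr rfl))
  have rb'sab' : r b' sab' := (hab' b').2 (Or.inr rfl)
  have rbsab : r b sab := (hab b).2 (Or.inr rfl)
  rcases hsa' with e | e
  · have haa : a = a' := by
      have h3 : r a' sa := by rw [← e]; exact (mem_sa' a').2 rfl
      exact ((mem_sa a').1 h3).symm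
    rcases hsab' with f | f
    · have hb' : b' = a := by
        have h3 : r b' sa := by rw [← f]; exact rb'sab'
        exact (mem_sa b').1 h3
      have hsab2 : sab = sa := by
        rcases hsab with g | g
        · rw [g, e]
        · rw [g, f]
      have hb : b = a := by
        have h3 : r b sa := by rw [← hsab2]; exact rbsab
        exact (mem_sa b).1 h3
      exact ⟨haa, by rw [hb, hb']⟩
    · have hb'ab : b' = a ∨ b' = b := by
        have h3 : r b' sab := by rw [← f]; exact rb'sab'
        exact (hab b').1 h3
      rcases hb'ab with g | g
      · have hbmem : b = a' ∨ b = b' := by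
          have h3 : r b sab' := by rw [f]; exact rbsab
          exact (hab' b).1 h3
        have hb : b = a := by
          rcases hbmem with g2 | g2
          · rw [g2, ← haa]
          · rw [g2, g]
        exact ⟨haa, by rw [hb, g]⟩
      · exact ⟨haa, g.symm⟩
  · have haa : a = a' := by
      have h3 : r a sa' := by rw [e]; exact (hab a).2 (Or.inl rfl)
      exact (mem_sa' a).1 h3
    have hb : b = a' := by
      have h3 : r b sa' := by rw [e]; exact rbsab
      exact (mem_sa' b).1 h3
    rcases hsab' with f | f
    · have hb' : b' = a := by
        have h3 : r b' sa := by rw [← f]; exact rb'sab'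
        exact (mem_sa b').1 h3
      exact ⟨haa, by rw [hb', hb, ← haa]⟩
    · have hb'ab : b' = a ∨ b' = b := by
        have h3 : r b' sab := by rw [← f]; exact rb'sab'
        exact (hab b').1 h3
      have hb'2 : b' = a' := by
        rcases hb'ab with g | g
        · rw [g, haa]
        · rw [g, hb]
      exact ⟨haa, by rw [hb'2, hb]⟩

/-- The formula `∀ w t (w ∈ z → t ∈ w → t ∈ prm)`. -/
def sepFml : L3.BoundedFormula (Fin 1) 1 :=
  .all (.all ((BoundedFormula.rel Rels.mem ![Term.var (Sum.inr 1), Term.var (Sum.inr 0)]).imp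
    ((BoundedFormula.rel Rels.mem ![Term.var (Sum.inr 2), Term.var (Sum.inr 1)]).imp
     (BoundedFormula.rel Rels.mem ![Term.var (Sum.inr 2), Term.var (Sum.inl 0)]))))

lemma realize_sepFml {u : ZFUniv.{u}} (c z : u.V) :
    RealizeIn u.mem sepFml ![c] ![z] ↔ ∀ p t, u.mem p z → u.mem t p → u.mem t c := by
  letI : L3.Structure u.V := memStr u.mem
  unfold RealizeIn sepFml
  rw [BoundedFormula.realize_all]
  refine forall_congr' fun p => ?_
  rw [BoundedFormula.realize_all]
  refine forall_congr' fun t => ?_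
  rw [BoundedFormula.realize_imp, BoundedFormula.realize_imp, BF_realize_mem, BF_realize_mem,
    BF_realize_mem, memStr_mem, memStr_mem, memStr_mem]
  simp [Fin.snoc]

/-- Separation instance: restriction of a set of pairs to those with entries in `c`. -/
lemma exists_restrict (w : ZFUniv.{u}) (f c : w.V) :
    ∃ g, ∀ z, w.mem z g ↔
      (w.mem z f ∧ ∀ p t, w.mem p z → w.mem t p → w.mem t c) := by
  obtain ⟨g, hg⟩ := w.separation 1 sepFml ![c] f
  exact ⟨g, fun z => (hg z).trans (and_congr_right fun _ => by
    have := realize_sepFml (u := w) c z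
    rw [show (fun _ : Fin 1 => z) = ![z] from by funext i; fin_cases i <;> rfl]
    exact this)⟩

end Chunk6

section Chunk7

/-- The membership formula with two free variables. -/
def memFml2 : L3.Formula (Fin 2) :=
  BoundedFormula.rel Rels.mem ![Term.var (Sum.inl 0), Term.var (Sum.inl 1)]

lemma realize_memFml2 {U : Type w} {s : U → U → Prop} {dN B1 B2 : U → Prop}
    (a b : {x // dN x}) :
    @Formula.Realize L3 _ (mstr dN s B1 B2) _ memFml2 ![a, b] ↔ s a.1 b.1 := Iff.rfl

lemma main_construction (u : ZFUniv.{u}) (δ M A : u.V) (Q : u.V → Prop)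
    (hMt : TransW u.mem M) (hδM : SubW u.mem δ M) (hA : SubW u.mem A M)
    (hPB : ∀ N, TransW u.mem N → SubW u.mem δ N →
      ∃ (D : PlainEmb u N) (κ : u.V), D.tgtIs N ∧ D.crit κ ∧ u.mem κ δ ∧ Q κ) :
    ∃ (D : GenEmb u M (u.mem · A) (fun _ => False)) (κ : u.V),
      D.tgtIs M ∧ D.bMatch (u.mem · A) ∧ D.crit κ ∧ u.mem κ δ ∧ Q κ := by
  classical
  obtain ⟨N, sM, P, hsM, hP, hN⟩ := exists_codeSet u M A
  have hNt : TransW u.mem N := codeN_trans hsM hP hN hMt hA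
  have hMN : u.mem M N := codeN_MmemN hsM hP hN hMt hA
  have hδN : SubW u.mem δ N := fun x hx => (hN x).2 (Or.inl (hδM x hx))
  have hMsubN : ∀ {x}, u.mem x M → u.mem x N := fun {x} hx => hNt M x hMN hx
  obtain ⟨D, κ, htgt, hcrit, hκδ, hQ⟩ := hPB N hNt hδN
  set W := D.E.W with hW
  letI S1 : L3.Structure {x // u.mem x N} :=
    mstr (u.mem · N) u.mem (fun _ => False) (fun _ => False)
  letI S2 : L3.Structure {w // W.mem w D.tgt} :=
    mstr (W.mem · D.tgt) W.mem (W.mem · D.bset) D.b2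
  let π : @ElementaryEmbedding L3 {x // u.mem x N} {w // W.mem w D.tgt} S1 S2 := D.emb
  -- target elements are `inc` of elements of `N`
  have tgt_elems : ∀ w', W.mem w' D.tgt → ∃ y, u.mem y N ∧ w' = D.E.inc y := by
    intro w' hw'
    rw [htgt] at hw'
    exact D.E.inc_trans N w' hw'
  have inc_tgt : ∀ {y}, u.mem y N → W.mem (D.E.inc y) D.tgt := by
    intro y hy; rw [htgt]; exact (D.E.inc_mem y N).2 hy
  -- Step 1 : π(M) = inc M
  have hjM : (eApp D.emb ⟨M, hMN⟩).1 = D.E.inc M := by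
    have hground : @Formula.Realize L3 _ S1 _ phiM ![⟨M, hMN⟩] := by
      rw [realize_phiM]
      refine ⟨⟨⟨sM, codeN_sMmemN hsM hP hN hMt hA⟩, codeN_MmemsM hsM hP hN hMt hA⟩, ?_⟩
      intro p hp w
      exact codeN_maximal hsM hP hN hMt hA p.2 hp w.1 w.2
    have htgtreal : @Formula.Realize L3 _ S2 _ phiM ![eApp D.emb ⟨M, hMN⟩] := by
      have h2 := (π.map_formula phiM ![⟨M, hMN⟩]).2 hground
      convert h2 using 2
      funext i
      fin_cases i
      rfl
    rw [realize_phiM] at htgtreal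
    obtain ⟨⟨p, hp⟩, hmax⟩ := htgtreal
    obtain ⟨m₀, hm₀N, hm₀eq⟩ := tgt_elems _ (eApp D.emb ⟨M, hMN⟩).2
    obtain ⟨p₀, hp₀N, hp₀eq⟩ := tgt_elems p.1 p.2
    have hm₀M : m₀ = M := by
      refine codeN_unique hsM hP hN hMt hA hm₀N ⟨p₀, hp₀N, ?_⟩ ?_
      · refine (D.E.inc_mem m₀ p₀).1 ?_
        rw [← hm₀eq, ← hp₀eq]
        exact hp
      · intro q hqN hmq w' hwN hqw
        refine hmax ⟨D.E.inc q, inc_tgt hqN⟩ ?_ ⟨D.E.inc w', inc_tgt hwN⟩ ?_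
        · rw [hm₀eq]
          exact (D.E.inc_mem m₀ q).2 hmq
        · exact (D.E.inc_mem q w').2 hqw
    rw [hm₀eq, hm₀M]
  -- Step 2 : π maps M into inc M
  have hπM : ∀ (x : u.V) (hx : u.mem x M),
      W.mem (eApp D.emb ⟨x, hMsubN hx⟩).1 (D.E.inc M) := by
    intro x hx
    have hgr : @Formula.Realize L3 _ S1 _ memFml2 ![⟨x, hMsubN hx⟩, ⟨M, hMN⟩] :=
      (realize_memFml2 _ _).2 hx
    have h2 := (π.map_formula memFml2 ![⟨x, hMsubN hx⟩, ⟨M, hMN⟩]).2 hgr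
    have h3 : @Formula.Realize L3 _ S2 _ memFml2
        ![eApp D.emb ⟨x, hMsubN hx⟩, eApp D.emb ⟨M, hMN⟩] := by
      convert h2 using 2
      funext i
      fin_cases i <;> rfl
    have h4 := (realize_memFml2 (s := W.mem) _ _).1 h3
    rwa [hjM] at h4
  -- Step 3 : the restricted map
  let e : {x // u.mem x M} → {w // W.mem w (D.E.inc M)} :=
    fun x => ⟨(eApp D.emb ⟨x.1, hMsubN x.2⟩).1, hπM x.1 x.2⟩
  -- Step 4 : elementarity
  have helem : ∀ {n : ℕ} (θ : L3.Formula (Fin n)) (v : Fin n → {x // u.mem x M}),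
      (@Formula.Realize L3 _ (mstr (W.mem · (D.E.inc M)) W.mem (W.mem · (D.E.inc A))
        (fun _ => False)) _ θ (e ∘ v) ↔
       @Formula.Realize L3 _ (mstr (u.mem · M) u.mem (u.mem · A) (fun _ => False)) _ θ v) := by
    intro n θ v
    have hpsi : ∀ (x : u.V), u.mem x M →
        (u.mem x A ↔ ∃ p, u.mem p N ∧ u.mem x p ∧ u.mem M p ∧ x ≠ M) :=
      fun x hx => codeN_psi hsM hP hN hMt hA (hMsubN hx)
    have h1 := realize_Rel (α := Fin n) u.mem (fun z => u.mem z N) (fun z => u.mem z M)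
      (fun z => u.mem z A) (fun _ => False) (fun _ => False) M hMN
      (fun x hx => hMsubN hx) (fun x _ => Iff.rfl) hpsi θ v default
    have hMW : ∀ w', W.mem w' (D.E.inc M) → W.mem w' D.tgt := by
      intro w' hw'
      obtain ⟨y, hyM, rfl⟩ := D.E.inc_trans M w' hw'
      exact inc_tgt (hMsubN hyM)
    have hAW : ∀ w', W.mem w' (D.E.inc M) →
        (W.mem w' (D.E.inc A) ↔ ∃ p, W.mem p D.tgt ∧ W.mem w' p ∧
          W.mem (D.E.inc M) p ∧ w' ≠ D.E.inc M) := by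
      intro w' hw'
      obtain ⟨x₀, hx₀M, rfl⟩ := D.E.inc_trans M w' hw'
      constructor
      · intro hwA
        obtain ⟨p₀, hp₀N, hxp₀, hMp₀, hne⟩ :=
          (hpsi x₀ hx₀M).1 ((D.E.inc_mem x₀ A).1 hwA)
        exact ⟨D.E.inc p₀, inc_tgt hp₀N, (D.E.inc_mem _ _).2 hxp₀,
          (D.E.inc_mem _ _).2 hMp₀, fun hEq => hne (D.E.inc_inj hEq)⟩
      · rintro ⟨p, hpT, hxp, hMp, hne⟩
        obtain ⟨p₀, hp₀N, rfl⟩ := tgt_elems p hpT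
        refine (D.E.inc_mem _ _).2 ((hpsi x₀ hx₀M).2
          ⟨p₀, hp₀N, (D.E.inc_mem _ _).1 hxp, (D.E.inc_mem _ _).1 hMp,
            fun h => hne (congrArg D.E.inc h)⟩)
    have h3 := realize_Rel (α := Fin n) W.mem (fun z => W.mem z D.tgt)
      (fun z => W.mem z (D.E.inc M)) (fun z => W.mem z (D.E.inc A))
      (fun z => W.mem z D.bset) D.b2 (D.E.inc M) (inc_tgt hMN) hMW
      (fun x _ => Iff.rfl) hAW θ (e ∘ v) default
    have h2 := π.map_boundedFormula (n := 0) (Rel θ)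
      (Sum.elim (fun i => (⟨(v i).1, hMsubN (v i).2⟩ : {x // u.mem x N}))
        (fun _ => ⟨M, hMN⟩)) default
    have hbigveq : (⇑π ∘ ((Sum.elim (fun i => (⟨(v i).1, hMsubN (v i).2⟩ :
        {x // u.mem x N})) (fun _ => ⟨M, hMN⟩)) : Fin n ⊕ Fin 1 → {x // u.mem x N})) =
        ((Sum.elim (fun i => (⟨((e ∘ v) i).1, hMW _ ((e ∘ v) i).2⟩ :
          {w // W.mem w D.tgt})) (fun _ => ⟨D.E.inc M, inc_tgt hMN⟩)) :
            Fin n ⊕ Fin 1 → {w // W.mem w D.tgt}) := by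
      funext b
      rcases b with i | i
      · rfl
      · exact Subtype.ext hjM
    refine h3.trans (Iff.trans ?_ h1.symm)
    convert h2 using 2
    exact hbigveq.symm
  -- Step 5 : the code
  obtain ⟨g, hg⟩ := exists_restrict W D.code (D.E.inc M)
  have hcode_graph : ∀ (x : u.V) (hx : u.mem x M),
      FApp W.mem g (D.E.inc x) (e ⟨x, hx⟩).1 := by
    intro x hx
    obtain ⟨z, hzc, hop⟩ := D.code_graph x (hMsubN hx)
    refine ⟨z, (hg z).2 ⟨hzc, ?_⟩, hop⟩
    obtain ⟨sa, sab, hsa, hsab, hz⟩ := hop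
    intro p t hpz htp
    rcases (hz p).1 hpz with rfl | rfl
    · rcases (hsa t).1 htp with rfl | rfl <;> exact (D.E.inc_mem x M).2 hx
    · rcases (hsab t).1 htp with rfl | rfl
      · exact (D.E.inc_mem x M).2 hx
      · exact hπM x hx
  have hcode_fun : IsFuncW W.mem g (D.E.inc M) (D.E.inc M) := by
    refine ⟨⟨?_, ?_, ?_⟩, ?_⟩
    · intro z hzg
      obtain ⟨hzc, hcond⟩ := (hg z).1 hzg
      obtain ⟨x, y, hxN, hop⟩ := D.code_fun.1.1 z hzc
      refine ⟨x, y, ?_, hop⟩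
      obtain ⟨sa, sab, hsa, hsab, hz⟩ := hop
      exact hcond sa x ((hz sa).2 (Or.inl rfl)) ((hsa x).2 (Or.inl rfl))
    · intro x' hx'
      obtain ⟨x₀, hx₀M, rfl⟩ := D.E.inc_trans M x' hx'
      exact ⟨(e ⟨x₀, hx₀M⟩).1, hcode_graph x₀ hx₀M⟩
    · intro x y y' h1 h2
      obtain ⟨z, hz, hop⟩ := h1
      obtain ⟨z', hz', hop'⟩ := h2
      exact D.code_fun.1.2.2 x y y' ⟨z, ((hg z).1 hz).1, hop⟩ ⟨z', ((hg z').1 hz').1, hop'⟩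
    · intro x y hF
      obtain ⟨z, hzg, hop⟩ := hF
      obtain ⟨hzc, hcond⟩ := (hg z).1 hzg
      obtain ⟨sa, sab, hsa, hsab, hz⟩ := hop
      exact hcond sab y ((hz sab).2 (Or.inr rfl)) ((hsab y).2 (Or.inr rfl))
  -- assemble
  let emb' : ElemEmb (u.mem · M) u.mem (u.mem · A) (fun _ => False)
      (W.mem · (D.E.inc M)) W.mem (W.mem · (D.E.inc A)) (fun _ => False) :=
    @ElementaryEmbedding.mk L3 _ _
      (mstr (u.mem · M) u.mem (u.mem · A) (fun _ => False))
      (mstr (W.mem · (D.E.inc M)) W.mem (W.mem · (D.E.inc A)) (fun _ => False))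
      e (fun n θ v => helem θ v)
  refine ⟨⟨D.E, D.E.inc M, D.E.inc A, fun _ => False,
    emb', g, hcode_fun, hcode_graph⟩, κ, rfl, ?_, ?_, hκδ, hQ⟩
  · intro x hx
    exact D.E.inc_mem x A
  · obtain ⟨hOrd, hκN, hfix, hmove⟩ := hcrit
    have hκM : u.mem κ M := hδM κ hκδ
    refine ⟨hOrd, hκM, fun α hα hακ => ?_, ?_⟩
    · show (eApp D.emb ⟨α, hMsubN hα⟩).1 = D.E.inc α
      exact hfix α (hMsubN hα) hακ
    · show (eApp D.emb ⟨κ, hMsubN hκM⟩).1 ≠ D.E.inc κ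
      exact hmove

end Chunk7
/-- **Proposition 5.3 (virtualised Cutolo).** If `δ` is virtually proto-Berkeley, then for
every transitive set `M` with `δ ⊆ M` and every `A ⊆ M` there is a generic elementary
embedding `π : (M, ∈, A) → (M, ∈, A)` with `crit π < δ`. If `δ` is virtually Berkeley,
then moreover `crit π` can be chosen arbitrarily large below `δ`. -/
theorem protoBerkeley_boldface (u : ZFUniv.{u}) (δ : u.V) (hδ : IsCardW u.mem δ) :
    (VirtProtoBerkeley u δ →
      ∀ M, TransW u.mem M → SubW u.mem δ M → ∀ A, SubW u.mem A M →
        ∃ (D : GenEmb u M (u.mem · A) (fun _ => False)) (κ : u.V),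
          D.tgtIs M ∧ D.bMatch (u.mem · A) ∧ D.crit κ ∧ u.mem κ δ) ∧
    (VirtBerkeley u δ →
      ∀ M, TransW u.mem M → SubW u.mem δ M → ∀ A, SubW u.mem A M → ∀ η, u.mem η δ →
        ∃ (D : GenEmb u M (u.mem · A) (fun _ => False)) (κ : u.V),
          D.tgtIs M ∧ D.bMatch (u.mem · A) ∧ D.crit κ ∧ u.mem η κ ∧ u.mem κ δ) := by
  constructor
  · intro hPB M hMtr hδsub A hAsub
    obtain ⟨D, κ, h1, h2, h3, h4, _⟩ := main_construction u δ M A (fun _ => True)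
      hMtr hδsub hAsub (fun N hNt hδN => by
        obtain ⟨D, κ, ht, hc, hκδ⟩ := hPB N hNt hδN
        exact ⟨D, κ, ht, hc, hκδ, trivial⟩)
    exact ⟨D, κ, h1, h2, h3, h4⟩
  · intro hB M hMtr hδsub A hAsub η hη
    obtain ⟨D, κ, h1, h2, h3, h4, h5⟩ := main_construction u δ M A (fun κ => u.mem η κ)
      hMtr hδsub hAsub (fun N hNt hδN => by
        obtain ⟨D, κ, ht, hc, hηκ, hκδ⟩ := hB N hNt hδN η hη
        exact ⟨D, κ, ht, hc, hκδ, hηκ⟩)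
    exact ⟨D, κ, h1, h2, h3, h5, h4⟩

end VLC
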